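/- Let K be an algebraically closed field, let M_r ⊆ K^{m×n} be the variety of matrices of rank at most r, and let A ∈ M_r with rank(A) = r. Then the tangent space T_A M_r, viewed as a matrix space, satisfies SR(T_A M_r) ≤ 2r. -/

import Mathlib

open scoped BigOperators

/-- `SliceRankLE T r` : the 3-tensor `T` has slice rank at most `r`. -/
def SliceRankLE {F : Type*} [Field F] {n1 n2 n3 : ℕ}
    (T : Fin n1 → Fin n2 → Fin n3 → F) (r : ℕ) : Prop :=
  ∃ r1 r2 r3 : ℕ, r1 + r2 + r3 = r ∧
    ∃ (a : Fin r1 → Fin n1 → F) (g1 : Fin r1 → Fin n2 → Fin n3 → F)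
      (b : Fin r2 → Fin n2 → F) (g2 : Fin r2 → Fin n1 → Fin n3 → F)
      (c : Fin r3 → Fin n3 → F) (g3 : Fin r3 → Fin n1 → Fin n2 → F),
      ∀ i j k, T i j k =
        (∑ s, a s i * g1 s j k) + (∑ s, b s j * g2 s i k) + (∑ s, c s k * g3 s i j)

/-- The slice rank of a 3-tensor. -/
noncomputable def sliceRank {F : Type*} [Field F] {n1 n2 n3 : ℕ}
    (T : Fin n1 → Fin n2 → Fin n3 → F) : ℕ :=
  sInf {r | SliceRankLE T r}

/-- Dimension of an affine algebraic set: Krull dimension of its coordinate ring. -/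
noncomputable def varietyDim {K : Type*} [Field K] {σ : Type*} (V : Set (σ → K)) : ℕ :=
  ENat.toNat ((ringKrullDim (MvPolynomial σ K ⧸ MvPolynomial.vanishingIdeal K V)).unbotD 0)

/-- The kernel variety of the bilinear map corresponding to a 3-tensor,
over the algebraic closure. -/
def kerSet {F : Type*} [Field F] {n1 n2 n3 : ℕ}
    (T : Fin n1 → Fin n2 → Fin n3 → F) :
    Set ((Fin n1 ⊕ Fin n2) → AlgebraicClosure F) :=
  {w | ∀ k : Fin n3,
    ∑ i : Fin n1, ∑ j : Fin n2,
      algebraMap F (AlgebraicClosure F) (T i j k) * w (Sum.inl i) * w (Sum.inr j) = 0}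

/-- The geometric rank of a 3-tensor. -/
noncomputable def geoRank {F : Type*} [Field F] {n1 n2 n3 : ℕ}
    (T : Fin n1 → Fin n2 → Fin n3 → F) : ℕ :=
  n1 + n2 - varietyDim (kerSet T)

/-- The analytic rank of a 3-tensor over a finite field, w.r.t. an additive character χ. -/
noncomputable def analyticRank {F : Type*} [Field F] [Fintype F] {n1 n2 n3 : ℕ}
    (χ : AddChar F ℂ) (T : Fin n1 → Fin n2 → Fin n3 → F) : ℝ :=
  - Real.logb (Fintype.card F)
      (((∑ x : Fin n1 → F, ∑ y : Fin n2 → F, ∑ z : Fin n3 → F,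
          χ (∑ i, ∑ j, ∑ k, T i j k * x i * y j * z k)) /
        ((Fintype.card F : ℂ) ^ (n1 + n2 + n3))).re)

/-- The tangent space of a (sub)set `V ⊆ K^σ` at a point `p`. -/
def tangentSpaceAt (K : Type*) [Field K] {σ : Type*} [Fintype σ] [DecidableEq σ]
    (V : Set (σ → K)) (p : σ → K) : Set (σ → K) :=
  {v | ∀ g ∈ MvPolynomial.vanishingIdeal K V,
    ∑ i, v i * MvPolynomial.eval p (MvPolynomial.pderiv i g) = 0}

/-- `matrixSRLE L r`: the matrix space `L` has slice rank at most `r`; the slice rank of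
a matrix space is the slice rank of the 3-tensor obtained from any basis of `L`. -/
def matrixSRLE {K : Type*} [Field K] {m n : ℕ}
    (L : Submodule K (Matrix (Fin m) (Fin n) K)) (r : ℕ) : Prop :=
  ∀ (d : ℕ) (B : Fin d → Matrix (Fin m) (Fin n) K),
    LinearIndependent K B → Submodule.span K (Set.range B) = L →
      SliceRankLE (fun i j k => B k i j) r

/-- The slice rank of a matrix space. -/
noncomputable def matrixSliceRank {K : Type*} [Field K] {m n : ℕ}
    (L : Submodule K (Matrix (Fin m) (Fin n) K)) : ℕ :=
  sInf {r | matrixSRLE L r}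

/-- The min-entropy of a map between finite sets (inputs uniform at random). -/
noncomputable def minEntropy {A B : Type*} [Fintype A] [Fintype B] [DecidableEq B]
    (X : A → B) : ℝ :=
  - Real.logb 2
      (((Finset.univ.sup fun b => (Finset.univ.filter fun a => X a = b).card : ℕ) : ℝ) /
        (Fintype.card A : ℝ))

/-- The Levi-Civita tensor: the 3-tensor of the 3×3 determinant polynomial. -/
def leviCivita (F : Type*) [Field F] : Fin 3 → Fin 3 → Fin 3 → F := fun i j k =>
  if (i, j, k) = (0, 1, 2) ∨ (i, j, k) = (1, 2, 0) ∨ (i, j, k) = (2, 0, 1) then 1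
  else if (i, j, k) = (2, 1, 0) ∨ (i, j, k) = (1, 0, 2) ∨ (i, j, k) = (0, 2, 1) then -1
  else 0

section SliceAux
open MvPolynomial

noncomputable def Dder {K : Type*} [Field K] {σ : Type*} [Fintype σ]
    (A x : σ → K) : MvPolynomial σ K →ₗ[K] K where
  toFun f := ∑ p, x p * MvPolynomial.eval A (MvPolynomial.pderiv p f)
  map_add' f g := by simp [mul_add, Finset.sum_add_distrib]
  map_smul' c f := by simp [Finset.mul_sum, mul_left_comm]

lemma Dder_mul {K : Type*} [Field K] {σ : Type*} [Fintype σ]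
    (A x : σ → K) (f g : MvPolynomial σ K) :
    Dder A x (f * g) = Dder A x f * eval A g + eval A f * Dder A x g := by
  simp only [Dder, LinearMap.coe_mk, AddHom.coe_mk, pderiv_mul, map_add, map_mul,
    mul_add, Finset.sum_add_distrib, Finset.sum_mul, Finset.mul_sum]
  congr 1
  · exact Finset.sum_congr rfl fun p _ => by ring
  · exact Finset.sum_congr rfl fun p _ => by ring

lemma Dder_X {K : Type*} [Field K] {σ : Type*} [Fintype σ] [DecidableEq σ]
    (A x : σ → K) (p : σ) : Dder A x (X p) = x p := by
  simp [Dder, MvPolynomial.pderiv_X, Pi.single_apply]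

lemma Dder_C_mul_X {K : Type*} [Field K] {σ : Type*} [Fintype σ] [DecidableEq σ]
    (A x : σ → K) (c : K) (p : σ) : Dder A x (C c * X p) = c * x p := by
  rw [Dder_mul, Dder_X]
  simp [Dder]

lemma Dder_prod {K : Type*} [Field K] {σ : Type*} [Fintype σ]
    (A x : σ → K) {ι : Type*} [DecidableEq ι] (s : Finset ι) (f : ι → MvPolynomial σ K) :
    Dder A x (∏ i ∈ s, f i) =
      ∑ i ∈ s, Dder A x (f i) * ∏ j ∈ s.erase i, eval A (f j) := by
  classical
  induction s using Finset.induction_on with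
  | empty => simp [Dder]
  | insert a s h ih =>
    rw [Finset.prod_insert h, Dder_mul, ih, Finset.sum_insert h, Finset.erase_insert h]
    rw [Finset.mul_sum]
    congr 1
    · rw [map_prod]
    · rw [Finset.sum_congr rfl]
      intro i hi
      rw [Finset.erase_insert_of_ne (by rintro rfl; exact h hi), Finset.prod_insert
        (fun hmem => h (Finset.mem_of_mem_erase hmem))]
      ring

lemma Dder_det {K : Type*} [Field K] {σ : Type*} [Fintype σ]
    (A x : σ → K) {k : ℕ} (M : Matrix (Fin k) (Fin k) (MvPolynomial σ K)) :
    Dder A x M.det = ∑ τ : Equiv.Perm (Fin k), (Equiv.Perm.sign τ : ℤ) *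
      ∑ s, Dder A x (M (τ s) s) * ∏ s' ∈ Finset.univ.erase s, eval A (M (τ s') s') := by
  rw [Matrix.det_apply, map_sum]
  refine Finset.sum_congr rfl fun τ _ => ?_
  rw [← Dder_prod]
  rcases Int.units_eq_one_or (Equiv.Perm.sign τ) with h | h <;>
    simp [h, Units.smul_def]

lemma exists_rank_factorization {K : Type*} [Field K] {m n r : ℕ}
    (A : Matrix (Fin m) (Fin n) K) (hA : A.rank = r) :
    ∃ (C : Matrix (Fin m) (Fin r) K) (R : Matrix (Fin r) (Fin n) K)
      (P : Matrix (Fin r) (Fin m) K) (Q : Matrix (Fin n) (Fin r) K),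
      A = C * R ∧ P * C = 1 ∧ R * Q = 1 := by
  classical
  set V := LinearMap.range A.mulVecLin with hV
  have hfin : Module.finrank K V = r := by rw [hV, ← Matrix.rank, hA]
  let b : Module.Basis (Fin r) K V := (Module.finBasis K V).reindex (finCongr hfin)
  let rl : V →ₗ[K] (Fin r →₀ K) := b.repr
  -- columns of A
  have hcol : ∀ j : Fin n, (fun i => A i j) ∈ V := by
    intro j
    refine ⟨Pi.single j 1, ?_⟩
    ext i
    simp [Matrix.mulVecLin, Matrix.mulVec, dotProduct, Pi.single_apply]
  let C : Matrix (Fin m) (Fin r) K := Matrix.of fun i t => (b t : Fin m → K) i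
  let R : Matrix (Fin r) (Fin n) K := Matrix.of fun t j => b.repr ⟨_, hcol j⟩ t
  have hCR : A = C * R := by
    ext i j
    rw [Matrix.mul_apply]
    have := b.sum_repr ⟨_, hcol j⟩
    have := congrFun (congrArg (Subtype.val) this) i
    simp only [Submodule.coe_sum, Submodule.coe_smul, Finset.sum_apply, Pi.smul_apply,
      smul_eq_mul] at this
    rw [← this]
    exact Finset.sum_congr rfl fun t _ => by simp [C, R]; ring
  -- left inverse of C
  obtain ⟨F, hF⟩ := LinearMap.exists_extend (b.equivFun.toLinearMap)
  let P : Matrix (Fin r) (Fin m) K :=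
    Matrix.of fun s i => F (fun j => if i = j then 1 else 0) s
  have hPC : P * C = 1 := by
    ext s t
    rw [Matrix.mul_apply]
    have h1 : ∑ i, P s i * C i t = F ((b t : Fin m → K)) s := by
      conv_rhs => rw [pi_eq_sum_univ ((b t : Fin m → K))]
      rw [map_sum]
      simp only [map_smul, Finset.sum_apply, Pi.smul_apply, smul_eq_mul]
      exact Finset.sum_congr rfl fun i _ => by simp [P, C]; ring
    have h2 : F ((b t : Fin m → K)) = b.equivFun (b t) := by
      have := congrFun (congrArg (DFunLike.coe) hF) (b t)
      simpa using this
    rw [h1, h2, b.equivFun_self]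
    simp [Matrix.one_apply, eq_comm]
  -- right inverse of R
  have hsurj : ∀ t : Fin r, ∃ q : Fin n → K, A.mulVec q = (b t : Fin m → K) := by
    intro t
    obtain ⟨q, hq⟩ := (b t).2
    exact ⟨q, hq⟩
  choose q hq using hsurj
  have hqmem : ∀ t, A.mulVec (q t) ∈ V := by
    intro t; rw [hq]; exact (b t).2
  let Q : Matrix (Fin n) (Fin r) K := Matrix.of fun j t => q t j
  have hRQ : R * Q = 1 := by
    ext s t
    rw [Matrix.mul_apply]
    have key : (⟨A.mulVec (q t), hqmem t⟩ : V) = ∑ j, q t j • (⟨_, hcol j⟩ : V) := by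
      ext i
      simp only [Submodule.coe_sum, Submodule.coe_smul, Finset.sum_apply, Pi.smul_apply,
        smul_eq_mul]
      simp [Matrix.mulVec, dotProduct, mul_comm]
    have h1 : ∑ j, R s j * Q j t = rl ⟨A.mulVec (q t), hqmem t⟩ s := by
      rw [key, map_sum]
      simp only [map_smul, Finsupp.coe_smul, Finsupp.coe_finset_sum, Finset.sum_apply,
        Pi.smul_apply, smul_eq_mul]
      exact Finset.sum_congr rfl fun j _ => by simp [R, Q, rl]; ring
    have h2 : (⟨A.mulVec (q t), hqmem t⟩ : V) = b t := Subtype.ext (hq t)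
    rw [h1, h2]
    have : rl (b t) = Finsupp.single t 1 := b.repr_self t
    rw [this]
    simp [Matrix.one_apply, Finsupp.single_apply, eq_comm]
  exact ⟨C, R, P, Q, hCR, hPC, hRQ⟩

lemma tangent_kernel_compress {K : Type*} [Field K] {m n r : ℕ}
    (A : Matrix (Fin m) (Fin n) K)
    (C : Matrix (Fin m) (Fin r) K) (R : Matrix (Fin r) (Fin n) K)
    (P : Matrix (Fin r) (Fin m) K) (Q : Matrix (Fin n) (Fin r) K)
    (hCR : A = C * R) (hPC : P * C = 1) (hRQ : R * Q = 1)
    (x : Fin m × Fin n → K)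
    (hx : x ∈ tangentSpaceAt K
      {v : Fin m × Fin n → K | (Matrix.of fun i j => v (i, j)).rank ≤ r}
      (fun p => A p.1 p.2))
    (u : Fin m → K) (v : Fin n → K)
    (hu : ∀ j, ∑ i, u i * A i j = 0) (hv : ∀ i, ∑ j, A i j * v j = 0) :
    ∑ i, ∑ j, u i * x (i, j) * v j = 0 := by
  classical
  set A' : Fin m × Fin n → K := fun p => A p.1 p.2 with hA'
  set pc : Fin (r+1) → Fin m → K := Fin.lastCases u (fun s i => P s i) with hpc
  set qc : Fin (r+1) → Fin n → K := Fin.lastCases v (fun t j => Q j t) with hqc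
  have hpc_last : pc (Fin.last r) = u := by simp [hpc]
  have hpc_cast : ∀ s : Fin r, pc s.castSucc = fun i => P s i := by
    intro s; simp [hpc]
  have hqc_last : qc (Fin.last r) = v := by simp [hqc]
  have hqc_cast : ∀ t : Fin r, qc t.castSucc = fun j => Q j t := by
    intro t; simp [hqc]
  set M : Matrix (Fin (r+1)) (Fin (r+1)) (MvPolynomial (Fin m × Fin n) K) :=
    Matrix.of fun a b => ∑ p : Fin m × Fin n,
      MvPolynomial.C (pc a p.1 * qc b p.2) * MvPolynomial.X p with hM
  have hPAQ : P * A * Q = 1 := by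
    rw [hCR, ← Matrix.mul_assoc, Matrix.mul_assoc P C R, ← Matrix.mul_assoc P C R]
    rw [hPC, Matrix.one_mul, hRQ]
  -- evaluation of entries at A
  have hev : ∀ a b, MvPolynomial.eval A' (M a b) =
      if a = b ∧ a ≠ Fin.last r then 1 else 0 := by
    intro a b
    have base : MvPolynomial.eval A' (M a b) = ∑ i, ∑ j, pc a i * qc b j * A i j := by
      rw [hM]
      simp only [Matrix.of_apply, map_sum, map_mul, MvPolynomial.eval_C, MvPolynomial.eval_X]
      rw [Fintype.sum_prod_type]
    rw [base]
    refine Fin.lastCases ?_ ?_ a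
    · refine Fin.lastCases ?_ ?_ b
      · -- a = last, b = last
        rw [if_neg (by simp)]
        rw [hpc_last, hqc_last]
        rw [Finset.sum_congr rfl fun i _ => ?_]
        · exact Finset.sum_eq_zero fun i _ => rfl
        · have : ∑ j, u i * v j * A i j = u i * ∑ j, A i j * v j := by
            rw [Finset.mul_sum]; exact Finset.sum_congr rfl fun j _ => by ring
          rw [this, hv, mul_zero]
      · -- a = last, b = castSucc t
        intro t
        rw [if_neg (by simp [(Fin.castSucc_lt_last t).ne'])]
        rw [hpc_last, hqc_cast]
        rw [Finset.sum_comm]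
        refine Finset.sum_eq_zero fun j _ => ?_
        have : ∑ i, u i * Q j t * A i j = (∑ i, u i * A i j) * Q j t := by
          rw [Finset.sum_mul]; exact Finset.sum_congr rfl fun i _ => by ring
        rw [this, hu, zero_mul]
    · intro s
      refine Fin.lastCases ?_ ?_ b
      · -- a = castSucc s, b = last
        rw [if_neg (by simp [(Fin.castSucc_lt_last s).ne])]
        rw [hpc_cast, hqc_last]
        refine Finset.sum_eq_zero fun i _ => ?_
        have : ∑ j, P s i * v j * A i j = P s i * ∑ j, A i j * v j := by
          rw [Finset.mul_sum]; exact Finset.sum_congr rfl fun j _ => by ring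
        rw [this, hv, mul_zero]
      · -- a = castSucc s, b = castSucc t
        intro t
        rw [hpc_cast, hqc_cast]
        have : ∑ i, ∑ j, P s i * Q j t * A i j = (P * A * Q) s t := by
          rw [Matrix.mul_apply]
          rw [Finset.sum_comm]
          refine Finset.sum_congr rfl fun j _ => ?_
          rw [Matrix.mul_apply, Finset.sum_mul]
          exact Finset.sum_congr rfl fun i _ => by ring
        rw [this, hPAQ, Matrix.one_apply]
        by_cases h : s = t
        · subst h; rw [if_pos rfl, if_pos ⟨rfl, (Fin.castSucc_lt_last s).ne⟩]
        · rw [if_neg h, if_neg (by simp [h, Fin.castSucc_inj])]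
  have hD : ∀ a b, Dder A' x (M a b) = ∑ p : Fin m × Fin n, pc a p.1 * qc b p.2 * x p := by
    intro a b
    rw [hM]
    simp only [Matrix.of_apply, map_sum]
    exact Finset.sum_congr rfl fun p _ => by rw [Dder_C_mul_X]
  -- the determinant is in the vanishing ideal
  have hdet_mem : M.det ∈ MvPolynomial.vanishingIdeal K
      {v : Fin m × Fin n → K | (Matrix.of fun i j => v (i, j)).rank ≤ r} := by
    rw [MvPolynomial.mem_vanishingIdeal_iff]
    intro w hw
    set W : Matrix (Fin m) (Fin n) K := Matrix.of fun i j => w (i, j) with hW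
    set Pc : Matrix (Fin (r+1)) (Fin m) K := Matrix.of fun a i => pc a i with hPc
    set Qc : Matrix (Fin n) (Fin (r+1)) K := Matrix.of fun j b => qc b j with hQc
    have hmap : (MvPolynomial.eval w) M.det = (Pc * W * Qc).det := by
      rw [RingHom.map_det]
      congr 1
      ext a b
      simp only [RingHom.mapMatrix_apply, Matrix.map_apply]
      rw [hM]
      simp only [Matrix.of_apply, map_sum, map_mul, MvPolynomial.eval_C, MvPolynomial.eval_X]
      rw [Fintype.sum_prod_type, Matrix.mul_apply]
      rw [Finset.sum_comm]
      refine Finset.sum_congr rfl fun j _ => ?_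
      rw [Matrix.mul_apply, Finset.sum_mul]
      exact Finset.sum_congr rfl fun i _ => by simp [hPc, hQc, hW]; ring
    change (MvPolynomial.eval w) M.det = 0
    rw [hmap]
    by_contra hdet
    have hunit : IsUnit (Pc * W * Qc) :=
      (Matrix.isUnit_iff_isUnit_det _).2 (isUnit_iff_ne_zero.2 hdet)
    have h1 : (Pc * W * Qc).rank = r + 1 := by
      rw [Matrix.rank_of_isUnit _ hunit, Fintype.card_fin]
    have h2 : (Pc * W * Qc).rank ≤ r :=
      le_trans (le_trans (Matrix.rank_mul_le_left _ _) (Matrix.rank_mul_le_right _ _)) hw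
    omega
  -- tangent condition
  have htan : Dder A' x M.det = 0 := hx M.det hdet_mem
  rw [Dder_det] at htan
  -- reduce the permutation sum
  have hred : ∑ τ : Equiv.Perm (Fin (r+1)), ((Equiv.Perm.sign τ : ℤ) : K) *
      ∑ s, Dder A' x (M (τ s) s) *
        ∏ s' ∈ Finset.univ.erase s, MvPolynomial.eval A' (M (τ s') s') =
      Dder A' x (M (Fin.last r) (Fin.last r)) := by
    rw [Finset.sum_eq_single (1 : Equiv.Perm (Fin (r+1)))]
    · rw [Equiv.Perm.sign_one]
      rw [Finset.sum_eq_single (Fin.last r)]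
      · have hprod : ∏ s' ∈ Finset.univ.erase (Fin.last r),
            MvPolynomial.eval A' (M ((1 : Equiv.Perm (Fin (r+1))) s') s') = 1 := by
          refine Finset.prod_eq_one fun s' hs' => ?_
          have hne := Finset.ne_of_mem_erase hs'
          rw [Equiv.Perm.one_apply, hev, if_pos ⟨rfl, hne⟩]
        simp only [Equiv.Perm.one_apply] at hprod ⊢
        rw [hprod, mul_one]
        norm_num
      · intro s _ hs
        have hlast_mem : Fin.last r ∈ Finset.univ.erase s :=
          Finset.mem_erase.2 ⟨Ne.symm hs, Finset.mem_univ _⟩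
        rw [Finset.prod_eq_zero hlast_mem, mul_zero]
        rw [Equiv.Perm.one_apply, hev, if_neg]
        rintro ⟨h1, h2⟩; exact h2 h1
      · intro h; exact absurd (Finset.mem_univ _) h
    · intro τ _ hτ
      have hzero : ∀ s : Fin (r+1), Dder A' x (M (τ s) s) *
          ∏ s' ∈ Finset.univ.erase s, MvPolynomial.eval A' (M (τ s') s') = 0 := by
        intro s
        by_cases hs : s = Fin.last r
        · subst hs
          have hex : ∃ s' : Fin (r+1), s' ≠ Fin.last r ∧ τ s' ≠ s' := by
            by_contra hc
            push_neg at hc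
            apply hτ
            refine Equiv.ext fun s' => ?_
            simp only [Equiv.Perm.one_apply]
            rcases eq_or_ne s' (Fin.last r) with rfl | h
            · by_contra hne
              have h2 := hc (τ (Fin.last r)) hne
              exact hne (τ.injective h2)
            · exact hc s' h
          obtain ⟨s', hs'1, hs'2⟩ := hex
          have hmem : s' ∈ Finset.univ.erase (Fin.last r) :=
            Finset.mem_erase.2 ⟨hs'1, Finset.mem_univ _⟩
          rw [Finset.prod_eq_zero hmem, mul_zero]
          rw [hev, if_neg]
          rintro ⟨h1, _⟩; exact hs'2 h1
        · have hlast_mem : Fin.last r ∈ Finset.univ.erase s :=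
            Finset.mem_erase.2 ⟨Ne.symm hs, Finset.mem_univ _⟩
          rw [Finset.prod_eq_zero hlast_mem, mul_zero]
          rw [hev, if_neg]
          rintro ⟨h1, h2⟩; exact h2 h1
      rw [Finset.sum_congr rfl fun s _ => hzero s, Finset.sum_const_zero, mul_zero]
    · intro h; exact absurd (Finset.mem_univ _) h
  rw [hred, hD] at htan
  rw [hpc_last, hqc_last] at htan
  rw [Fintype.sum_prod_type] at htan
  rw [← htan]
  exact Finset.sum_congr rfl fun i _ => Finset.sum_congr rfl fun j _ => by ring

lemma slice_identity {K : Type*} [Field K] {m n r : ℕ}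
    (A : Matrix (Fin m) (Fin n) K)
    (C : Matrix (Fin m) (Fin r) K) (R : Matrix (Fin r) (Fin n) K)
    (P : Matrix (Fin r) (Fin m) K) (Q : Matrix (Fin n) (Fin r) K)
    (hCPA : C * (P * A) = A) (hAQR : A * Q * R = A)
    (X : Matrix (Fin m) (Fin n) K)
    (hX : ∀ (u : Fin m → K) (v : Fin n → K), (∀ j, ∑ i, u i * A i j = 0) →
      (∀ i, ∑ j, A i j * v j = 0) → ∑ i, ∑ j, u i * X i j * v j = 0)
    (i : Fin m) (j : Fin n) (u : Fin m → K) (v : Fin n → K)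
    (hu_eq : ∀ i', u i' = (if i' = i then (1:K) else 0) - ∑ t, C i t * P t i')
    (hv_eq : ∀ j', v j' = (if j' = j then (1:K) else 0) - ∑ s, R s j * Q j' s) :
    X i j = (∑ t, C i t * ∑ i', P t i' * X i' j)
      + ∑ s, R s j * ∑ i', ∑ j', u i' * X i' j' * Q j' s := by
  classical
  have hu : ∀ j', ∑ i', u i' * A i' j' = 0 := by
    intro j'
    have h : A i j' = ∑ t, C i t * ∑ i', P t i' * A i' j' := by
      have := congrFun (congrFun hCPA.symm i) j'
      simpa only [Matrix.mul_apply] using this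
    calc ∑ i', u i' * A i' j'
        = ∑ i', ((if i' = i then (1:K) else 0) * A i' j'
            - (∑ t, C i t * P t i') * A i' j') := by
          refine Finset.sum_congr rfl fun i' _ => ?_; rw [hu_eq]; ring
      _ = (∑ i', (if i' = i then (1:K) else 0) * A i' j')
            - ∑ i', (∑ t, C i t * P t i') * A i' j' := Finset.sum_sub_distrib _ _
      _ = A i j' - ∑ t, C i t * ∑ i', P t i' * A i' j' := by
          congr 1
          · simp [ite_mul]
          · simp_rw [Finset.sum_mul]
            rw [Finset.sum_comm]
            refine Finset.sum_congr rfl fun t _ => ?_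
            rw [Finset.mul_sum]
            exact Finset.sum_congr rfl fun i' _ => by ring
      _ = 0 := sub_eq_zero_of_eq h
  have hv : ∀ i', ∑ j', A i' j' * v j' = 0 := by
    intro i'
    have h : A i' j = ∑ s, (∑ j', A i' j' * Q j' s) * R s j := by
      have := congrFun (congrFun hAQR.symm i') j
      simpa only [Matrix.mul_apply] using this
    calc ∑ j', A i' j' * v j'
        = ∑ j', (A i' j' * (if j' = j then (1:K) else 0)
            - A i' j' * ∑ s, R s j * Q j' s) := by
          refine Finset.sum_congr rfl fun j' _ => ?_; rw [hv_eq]; ring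
      _ = (∑ j', A i' j' * (if j' = j then (1:K) else 0))
            - ∑ j', A i' j' * ∑ s, R s j * Q j' s := Finset.sum_sub_distrib _ _
      _ = A i' j - ∑ s, (∑ j', A i' j' * Q j' s) * R s j := by
          congr 1
          · simp [mul_ite]
          · simp_rw [Finset.mul_sum]
            rw [Finset.sum_comm]
            refine Finset.sum_congr rfl fun s _ => ?_
            rw [Finset.sum_mul]
            exact Finset.sum_congr rfl fun j' _ => by ring
      _ = 0 := sub_eq_zero_of_eq h
  have hmain := hX u v hu hv
  have key1 : ∑ s, R s j * ∑ i', ∑ j', u i' * X i' j' * Q j' s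
      = ∑ i', u i' * X i' j := by
    have step1 : ∑ s, R s j * ∑ i', ∑ j', u i' * X i' j' * Q j' s
        = ∑ i', ∑ j', u i' * X i' j' * (∑ s, R s j * Q j' s) := by
      simp_rw [Finset.mul_sum]
      rw [Finset.sum_comm]
      refine Finset.sum_congr rfl fun i' _ => ?_
      rw [Finset.sum_comm]
      refine Finset.sum_congr rfl fun j' _ => ?_
      exact Finset.sum_congr rfl fun s _ => by ring
    rw [step1]
    have step2 : ∀ i' j', u i' * X i' j' * (∑ s, R s j * Q j' s)
        = u i' * X i' j' * (if j' = j then (1:K) else 0) - u i' * X i' j' * v j' := by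
      intro i' j'; rw [hv_eq]; ring
    calc ∑ i', ∑ j', u i' * X i' j' * (∑ s, R s j * Q j' s)
        = (∑ i', ∑ j', u i' * X i' j' * (if j' = j then (1:K) else 0))
            - ∑ i', ∑ j', u i' * X i' j' * v j' := by
          rw [← Finset.sum_sub_distrib]
          refine Finset.sum_congr rfl fun i' _ => ?_
          rw [← Finset.sum_sub_distrib]
          exact Finset.sum_congr rfl fun j' _ => step2 i' j'
      _ = ∑ i', u i' * X i' j := by
          rw [hmain, sub_zero]
          exact Finset.sum_congr rfl fun i' _ => by simp [mul_ite]
  have key2 : ∑ i', u i' * X i' j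
      = X i j - ∑ t, C i t * ∑ i', P t i' * X i' j := by
    calc ∑ i', u i' * X i' j
        = ∑ i', ((if i' = i then (1:K) else 0) * X i' j
            - (∑ t, C i t * P t i') * X i' j) := by
          refine Finset.sum_congr rfl fun i' _ => ?_; rw [hu_eq]; ring
      _ = (∑ i', (if i' = i then (1:K) else 0) * X i' j)
            - ∑ i', (∑ t, C i t * P t i') * X i' j := Finset.sum_sub_distrib _ _
      _ = X i j - ∑ t, C i t * ∑ i', P t i' * X i' j := by
          congr 1
          · simp [ite_mul]
          · simp_rw [Finset.sum_mul]
            rw [Finset.sum_comm]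
            refine Finset.sum_congr rfl fun t _ => ?_
            rw [Finset.mul_sum]
            exact Finset.sum_congr rfl fun i' _ => by ring
  rw [key1, key2]
  ring

end SliceAux

/-- The tangent space to `M_r` at a rank-`r` matrix, viewed as a matrix
space, has slice rank at most `2r`. -/
theorem sliceRank_tangentSpace_determinantal
    {K : Type*} [Field K] [IsAlgClosed K] {m n r : ℕ}
    (A : Matrix (Fin m) (Fin n) K) (hA : A.rank = r) :
    matrixSliceRank (Submodule.span K
      ((fun v : Fin m × Fin n → K => Matrix.of fun i j => v (i, j)) ''
        tangentSpaceAt K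
          {v : Fin m × Fin n → K | (Matrix.of fun i j => v (i, j)).rank ≤ r}
          (fun p => A p.1 p.2))) ≤ 2 * r := by
  classical
  obtain ⟨C, R, P, Q, hCR, hPC, hRQ⟩ := exists_rank_factorization A hA
  have hCPA : C * (P * A) = A := by
    rw [hCR, ← Matrix.mul_assoc P C R, hPC, Matrix.one_mul]
  have hAQR : A * Q * R = A := by
    rw [hCR, Matrix.mul_assoc C R Q, hRQ, Matrix.mul_one]
  apply Nat.sInf_le
  intro d B _hBli hBspan
  have hprop : ∀ k, ∀ (u : Fin m → K) (v : Fin n → K), (∀ j, ∑ i, u i * A i j = 0) →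
      (∀ i, ∑ j, A i j * v j = 0) → ∑ i, ∑ j, u i * B k i j * v j = 0 := by
    intro k
    have hk : B k ∈ Submodule.span K
        ((fun v : Fin m × Fin n → K => Matrix.of fun i j => v (i, j)) ''
          tangentSpaceAt K
            {v : Fin m × Fin n → K | (Matrix.of fun i j => v (i, j)).rank ≤ r}
            (fun p => A p.1 p.2)) := hBspan ▸ Submodule.subset_span ⟨k, rfl⟩
    refine Submodule.span_induction (p := fun X _ => ∀ (u : Fin m → K) (v : Fin n → K),
        (∀ j, ∑ i, u i * A i j = 0) → (∀ i, ∑ j, A i j * v j = 0) →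
        ∑ i, ∑ j, u i * X i j * v j = 0) ?_ ?_ ?_ ?_ hk
    · rintro X ⟨x, hx, rfl⟩ u v hu hv
      simpa using tangent_kernel_compress A C R P Q hCR hPC hRQ x hx u v hu hv
    · intro u v _ _; simp
    · intro X Y _ _ hX hY u v hu hv
      have hsplit : ∑ i, ∑ j, u i * (X + Y) i j * v j =
          (∑ i, ∑ j, u i * X i j * v j) + ∑ i, ∑ j, u i * Y i j * v j := by
        rw [← Finset.sum_add_distrib]
        refine Finset.sum_congr rfl fun i _ => ?_
        rw [← Finset.sum_add_distrib]
        refine Finset.sum_congr rfl fun j _ => ?_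
        simp only [Matrix.add_apply]; ring
      rw [hsplit, hX u v hu hv, hY u v hu hv, add_zero]
    · intro c X _ hX u v hu hv
      have hsc : ∑ i, ∑ j, u i * (c • X) i j * v j =
          c * ∑ i, ∑ j, u i * X i j * v j := by
        rw [Finset.mul_sum]
        refine Finset.sum_congr rfl fun i _ => ?_
        rw [Finset.mul_sum]
        refine Finset.sum_congr rfl fun j _ => ?_
        simp only [Matrix.smul_apply, smul_eq_mul]; ring
      rw [hsc, hX u v hu hv, mul_zero]
  refine ⟨r, r, 0, by ring, (fun t i => C i t),
    (fun t j k => ∑ i', P t i' * B k i' j),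
    (fun s j => R s j),
    (fun s i k => ∑ i', ∑ j',
      ((if i' = i then (1:K) else 0) - ∑ t, C i t * P t i') * B k i' j' * Q j' s),
    (fun s => Fin.elim0 s), (fun s => Fin.elim0 s), ?_⟩
  intro i j k
  have hid := slice_identity A C R P Q hCPA hAQR (B k) (hprop k) i j
    (fun i' => (if i' = i then (1:K) else 0) - ∑ t, C i t * P t i')
    (fun j' => (if j' = j then (1:K) else 0) - ∑ s, R s j * Q j' s)
    (fun _ => rfl) (fun _ => rfl)
  simpa using hid
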